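/- arXiv:2007.05549 — 4 statements merged into one kernel-verified Lean document; each statement's English description precedes it below -/
import Mathlib

section
/- Let X, Y, and ε be random variables on a probability space taking values in finite sets, with ε independent of the pair (X, Y). Let g : E × 𝒴 → 𝒴 be an augmentation function and set Y' = g(ε, Y). Assume the map (e, x, y) ↦ (x, g(e, y)) is one-to-one on the support of (ε, X, Y). Then the conditional entropy satisfies H(Y' | X) = H(Y | X) + H(ε). -/
open MeasureTheory Real

/-- Shannon entropy (in nats) of a random variable `X` taking values in a finite set. -/
noncomputable def shannonEntropy {Ω : Type*} [MeasurableSpace Ω] {S : Type*} [Fintype S]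
    (μ : Measure Ω) (X : Ω → S) : ℝ :=
  ∑ x : S, Real.negMulLog ((μ (X ⁻¹' {x})).toReal)

/-- Conditional Shannon entropy `H(Y | X)` of a finitely-valued random variable `Y`
given a finitely-valued random variable `X`:
`H(Y|X) = ∑ₓ P(X = x) * ∑_y negMulLog (P(X = x, Y = y) / P(X = x))`
(with the conventions `0 * log 0 = 0` and `a / 0 = 0`). -/
noncomputable def condShannonEntropy {Ω : Type*} [MeasurableSpace Ω] {S T : Type*}
    [Fintype S] [Fintype T] (μ : Measure Ω) (Y : Ω → T) (X : Ω → S) : ℝ :=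
  ∑ x : S, (μ (X ⁻¹' {x})).toReal *
    ∑ y : T, Real.negMulLog ((μ (X ⁻¹' {x} ∩ Y ⁻¹' {y})).toReal / (μ (X ⁻¹' {x})).toReal)

/- ### Auxiliary lemmas -/

lemma aux_mul_negMulLog_div {a b : ℝ} (ha : 0 ≤ a) (hb : 0 < b) :
    b * Real.negMulLog (a / b) = Real.negMulLog a + a * Real.log b := by
  rcases eq_or_lt_of_le ha with h | h
  · simp [← h]
  · rw [Real.negMulLog, Real.negMulLog, Real.log_div h.ne' hb.ne']
    field_simp
    ring

lemma aux_negMulLog_sum_unique {ι : Type*} (s : Finset ι) (f : ι → ℝ)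
    (h : ∀ i ∈ s, ∀ j ∈ s, f i ≠ 0 → f j ≠ 0 → i = j) :
    Real.negMulLog (∑ i ∈ s, f i) = ∑ i ∈ s, Real.negMulLog (f i) := by
  classical
  have h1 : ∑ i ∈ s, f i = ∑ i ∈ s.filter (fun i => f i ≠ 0), f i :=
    (Finset.sum_filter_ne_zero s).symm
  have h2 : ∑ i ∈ s, Real.negMulLog (f i)
      = ∑ i ∈ s.filter (fun i => f i ≠ 0), Real.negMulLog (f i) := by
    refine (Finset.sum_filter_of_ne ?_).symm
    intro i _ hne
    intro hfi
    exact hne (by simp [hfi])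
  rw [h1, h2]
  rcases Finset.eq_empty_or_nonempty (s.filter (fun i => f i ≠ 0)) with h0 | ⟨a, ha⟩
  · simp [h0]
  · have hsingle : s.filter (fun i => f i ≠ 0) = {a} := by
      refine Finset.eq_singleton_iff_unique_mem.mpr ⟨ha, ?_⟩
      intro b hb
      have hbs := Finset.mem_filter.mp hb
      have has := Finset.mem_filter.mp ha
      exact h b hbs.1 a has.1 hbs.2 has.2
    simp [hsingle]

/-- Partition of the measure of a set along the values of a finitely-valued
measurable function. -/
lemma aux_measure_partition {Ω : Type*} [MeasurableSpace Ω] {T : Type*} [Fintype T]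
    [MeasurableSpace T] [MeasurableSingletonClass T]
    (μ : Measure Ω) (A : Set Ω) (hA : MeasurableSet A) (Y : Ω → T) (hY : Measurable Y) :
    μ A = ∑ y : T, μ (A ∩ Y ⁻¹' {y}) := by
  classical
  have hd : Set.PairwiseDisjoint ↑(Finset.univ : Finset T) (fun y => A ∩ Y ⁻¹' {y}) := by
    intro y1 _ y2 _ hne
    refine Set.disjoint_left.mpr ?_
    rintro ω ⟨_, h1⟩ ⟨_, h2⟩
    exact hne (by simp_all)
  have hm : ∀ y ∈ (Finset.univ : Finset T), MeasurableSet (A ∩ Y ⁻¹' {y}) := fun y _ =>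
    hA.inter (hY (measurableSet_singleton y))
  calc μ A = μ (⋃ y ∈ (Finset.univ : Finset T), (A ∩ Y ⁻¹' {y})) := by
        congr 1; ext ω; simp
    _ = ∑ y : T, μ (A ∩ Y ⁻¹' {y}) := measure_biUnion_finset hd hm

/-- `H(Y|X) = H(X,Y) - H(X)` for the explicit formulas. -/
lemma aux_condShannonEntropy_eq {Ω : Type*} [MeasurableSpace Ω] {S T : Type*}
    [Fintype S] [Fintype T]
    [MeasurableSpace S] [MeasurableSingletonClass S]
    [MeasurableSpace T] [MeasurableSingletonClass T]
    (μ : Measure Ω) [IsProbabilityMeasure μ]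
    (X : Ω → S) (Y : Ω → T) (hX : Measurable X) (hY : Measurable Y) :
    condShannonEntropy μ Y X
      = (∑ x : S, ∑ y : T, Real.negMulLog ((μ (X ⁻¹' {x} ∩ Y ⁻¹' {y})).toReal))
        - shannonEntropy μ X := by
  classical
  unfold condShannonEntropy shannonEntropy
  rw [← Finset.sum_sub_distrib]
  refine Finset.sum_congr rfl ?_
  intro x _
  set b : ℝ := (μ (X ⁻¹' {x})).toReal with hbdef
  by_cases hb : b = 0
  · have hμ0 : μ (X ⁻¹' {x}) = 0 := by
      have hne := measure_ne_top μ (X ⁻¹' {x})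
      rcases (ENNReal.toReal_eq_zero_iff _).mp hb with h | h
      · exact h
      · exact absurd h hne
    have hz : ∀ y : T, (μ (X ⁻¹' {x} ∩ Y ⁻¹' {y})).toReal = 0 := by
      intro y
      have : μ (X ⁻¹' {x} ∩ Y ⁻¹' {y}) = 0 :=
        measure_mono_null Set.inter_subset_left hμ0
      simp [this]
    simp only [hb, hz]
    simp
  · have hb0 : 0 ≤ b := ENNReal.toReal_nonneg
    have hbpos : 0 < b := lt_of_le_of_ne hb0 (Ne.symm hb)
    have hsum : ∑ y : T, (μ (X ⁻¹' {x} ∩ Y ⁻¹' {y})).toReal = b := by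
      rw [hbdef, aux_measure_partition μ _ (hX (measurableSet_singleton x)) Y hY,
        ENNReal.toReal_sum]
      intro y _
      exact measure_ne_top μ _
    rw [Finset.mul_sum]
    calc ∑ y : T, b * Real.negMulLog ((μ (X ⁻¹' {x} ∩ Y ⁻¹' {y})).toReal / b)
        = ∑ y : T, (Real.negMulLog ((μ (X ⁻¹' {x} ∩ Y ⁻¹' {y})).toReal)
            + (μ (X ⁻¹' {x} ∩ Y ⁻¹' {y})).toReal * Real.log b) := by
          refine Finset.sum_congr rfl fun y _ => ?_
          exact aux_mul_negMulLog_div ENNReal.toReal_nonneg hbpos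
      _ = (∑ y : T, Real.negMulLog ((μ (X ⁻¹' {x} ∩ Y ⁻¹' {y})).toReal))
            + b * Real.log b := by
          rw [Finset.sum_add_distrib, ← Finset.sum_mul, hsum]
      _ = (∑ y : T, Real.negMulLog ((μ (X ⁻¹' {x} ∩ Y ⁻¹' {y})).toReal))
            - Real.negMulLog b := by
          rw [Real.negMulLog]; ring

/-- **Theorem 1 of the paper.** If `ε` is independent of `(X, Y)` and the augmentation map
`(e, x, y) ↦ (x, g(e, y))` is one-to-one on the support of `(ε, X, Y)`, then setting
`Y' = g(ε, Y)` we have `H(Y' | X) = H(Y | X) + H(ε)`. -/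
theorem condEntropy_augment_eq_add_entropy
    {Ω E S T : Type*} [MeasurableSpace Ω]
    [Fintype E] [Fintype S] [Fintype T]
    [MeasurableSpace E] [MeasurableSingletonClass E]
    [MeasurableSpace S] [MeasurableSingletonClass S]
    [MeasurableSpace T] [MeasurableSingletonClass T]
    (μ : Measure Ω) [IsProbabilityMeasure μ]
    (X : Ω → S) (Y : Ω → T) (ε : Ω → E)
    (hX : Measurable X) (hY : Measurable Y) (hε : Measurable ε)
    (g : E → T → T)
    (hInd : ∀ (e : E) (x : S) (y : T),
      μ {ω | ε ω = e ∧ X ω = x ∧ Y ω = y}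
        = μ {ω | ε ω = e} * μ {ω | X ω = x ∧ Y ω = y})
    (hInj : Set.InjOn (fun p : E × S × T => (p.2.1, g p.1 p.2.2))
      {p : E × S × T | μ {ω | ε ω = p.1 ∧ X ω = p.2.1 ∧ Y ω = p.2.2} ≠ 0}) :
    condShannonEntropy μ (fun ω => g (ε ω) (Y ω)) X
      = condShannonEntropy μ Y X + shannonEntropy μ ε := by
  classical
  -- measurability of Y'
  have hY' : Measurable (fun ω => g (ε ω) (Y ω)) := by
    have : (fun ω => g (ε ω) (Y ω))
        = (fun p : E × T => g p.1 p.2) ∘ (fun ω => (ε ω, Y ω)) := rfl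
    rw [this]
    exact (measurable_of_countable _).comp (hε.prodMk hY)
  rw [aux_condShannonEntropy_eq μ X Y hX hY,
    aux_condShannonEntropy_eq μ X (fun ω => g (ε ω) (Y ω)) hX hY']
  -- abbreviations
  set q : E → ℝ := fun e => (μ (ε ⁻¹' {e})).toReal with hqdef
  set r : S → T → ℝ := fun x y => (μ (X ⁻¹' {x} ∩ Y ⁻¹' {y})).toReal with hrdef
  -- joint probability factorizes
  have hset : ∀ (e : E) (x : S) (y : T),
      {ω | ε ω = e ∧ X ω = x ∧ Y ω = y}
        = ε ⁻¹' {e} ∩ (X ⁻¹' {x} ∩ Y ⁻¹' {y}) := by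
    intro e x y; ext ω; simp [Set.mem_inter_iff]
  have hset2 : ∀ (x : S) (y : T),
      {ω | X ω = x ∧ Y ω = y} = X ⁻¹' {x} ∩ Y ⁻¹' {y} := by
    intro x y; ext ω; simp
  have hp : ∀ (e : E) (x : S) (y : T),
      (μ {ω | ε ω = e ∧ X ω = x ∧ Y ω = y}).toReal = q e * r x y := by
    intro e x y
    rw [hInd e x y, ENNReal.toReal_mul, hset2]
    congr 1
  -- key decomposition of the augmented joint probabilities
  have hkey : ∀ (x : S) (y' : T),
      Real.negMulLog ((μ (X ⁻¹' {x} ∩ (fun ω => g (ε ω) (Y ω)) ⁻¹' {y'})).toReal)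
        = ∑ p ∈ (Finset.univ : Finset (E × T)).filter (fun p => g p.1 p.2 = y'),
            Real.negMulLog ((μ {ω | ε ω = p.1 ∧ X ω = x ∧ Y ω = p.2}).toReal) := by
    intro x y'
    have hU : X ⁻¹' {x} ∩ (fun ω => g (ε ω) (Y ω)) ⁻¹' {y'}
        = ⋃ p ∈ (Finset.univ : Finset (E × T)).filter (fun p => g p.1 p.2 = y'),
            {ω | ε ω = p.1 ∧ X ω = x ∧ Y ω = p.2} := by
      ext ω
      simp only [Set.mem_inter_iff, Set.mem_preimage, Set.mem_singleton_iff,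
        Set.mem_iUnion, Finset.mem_filter, Finset.mem_univ, true_and,
        Set.mem_setOf_eq]
      constructor
      · rintro ⟨hx, hy⟩
        exact ⟨(ε ω, Y ω), hy, rfl, hx, rfl⟩
      · rintro ⟨⟨e, y⟩, hg, he, hx, hy⟩
        exact ⟨hx, by simp only at he hy ⊢; rw [← he, ← hy] at hg; exact hg⟩
    have hmeas : μ (X ⁻¹' {x} ∩ (fun ω => g (ε ω) (Y ω)) ⁻¹' {y'})
        = ∑ p ∈ (Finset.univ : Finset (E × T)).filter (fun p => g p.1 p.2 = y'),
            μ {ω | ε ω = p.1 ∧ X ω = x ∧ Y ω = p.2} := by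
      rw [hU, measure_biUnion_finset]
      · rintro ⟨e1, y1⟩ _ ⟨e2, y2⟩ _ hne
        refine Set.disjoint_left.mpr ?_
        rintro ω ⟨he1, _, hy1⟩ ⟨he2, _, hy2⟩
        exact hne (by simp_all)
      · rintro ⟨e, y⟩ _
        rw [hset]
        exact (hε (measurableSet_singleton e)).inter
          ((hX (measurableSet_singleton x)).inter (hY (measurableSet_singleton y)))
    rw [hmeas, ENNReal.toReal_sum (fun p _ => measure_ne_top μ _)]
    refine aux_negMulLog_sum_unique _ _ ?_
    rintro ⟨e1, y1⟩ h1 ⟨e2, y2⟩ h2 hne1 hne2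
    have hg1 : g e1 y1 = y' := (Finset.mem_filter.mp h1).2
    have hg2 : g e2 y2 = y' := (Finset.mem_filter.mp h2).2
    have hm1 : μ {ω | ε ω = e1 ∧ X ω = x ∧ Y ω = y1} ≠ 0 := fun h => hne1 (by simp [h])
    have hm2 : μ {ω | ε ω = e2 ∧ X ω = x ∧ Y ω = y2} ≠ 0 := fun h => hne2 (by simp [h])
    have hm1' : ((e1, x, y1) : E × S × T)
        ∈ {p : E × S × T | μ {ω | ε ω = p.1 ∧ X ω = p.2.1 ∧ Y ω = p.2.2} ≠ 0} := hm1
    have hm2' : ((e2, x, y2) : E × S × T)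
        ∈ {p : E × S × T | μ {ω | ε ω = p.1 ∧ X ω = p.2.1 ∧ Y ω = p.2.2} ≠ 0} := hm2
    have heq := hInj hm1' hm2' (by simp only; rw [hg1, hg2])
    simpa [Prod.ext_iff] using heq
  -- sums to one
  have hq1 : ∑ e : E, q e = 1 := by
    have h1 : ∑ e ∈ (Finset.univ : Finset E), μ (ε ⁻¹' {e}) = μ (ε ⁻¹' ↑(Finset.univ : Finset E)) :=
      sum_measure_preimage_singleton _ (fun e _ => hε (measurableSet_singleton e))
    have h2 : μ (ε ⁻¹' ↑(Finset.univ : Finset E)) = 1 := by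
      simp
    rw [hqdef]
    rw [← ENNReal.toReal_sum (fun e _ => measure_ne_top μ _)] at *
    rw [h1, h2]; simp
  have hrx : ∀ x : S, ∑ y : T, r x y = (μ (X ⁻¹' {x})).toReal := by
    intro x
    rw [aux_measure_partition μ _ (hX (measurableSet_singleton x)) Y hY,
      ENNReal.toReal_sum (fun y _ => measure_ne_top μ _)]
  have hr1 : ∑ x : S, ∑ y : T, r x y = 1 := by
    have h1 : ∑ x ∈ (Finset.univ : Finset S), μ (X ⁻¹' {x}) = μ (X ⁻¹' ↑(Finset.univ : Finset S)) :=
      sum_measure_preimage_singleton _ (fun x _ => hX (measurableSet_singleton x))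
    have h2 : μ (X ⁻¹' ↑(Finset.univ : Finset S)) = 1 := by simp
    calc ∑ x : S, ∑ y : T, r x y = ∑ x : S, (μ (X ⁻¹' {x})).toReal := by
          exact Finset.sum_congr rfl fun x _ => hrx x
      _ = 1 := by
          rw [← ENNReal.toReal_sum (fun x _ => measure_ne_top μ _), h1, h2]; simp
  -- main computation
  have hmain : ∑ x : S, ∑ y' : T,
      Real.negMulLog ((μ (X ⁻¹' {x} ∩ (fun ω => g (ε ω) (Y ω)) ⁻¹' {y'})).toReal)
      = (∑ x : S, ∑ y : T, Real.negMulLog (r x y)) + shannonEntropy μ ε := by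
    calc ∑ x : S, ∑ y' : T,
        Real.negMulLog ((μ (X ⁻¹' {x} ∩ (fun ω => g (ε ω) (Y ω)) ⁻¹' {y'})).toReal)
        = ∑ x : S, ∑ y' : T, ∑ p ∈ (Finset.univ : Finset (E × T)).filter
            (fun p => g p.1 p.2 = y'),
            Real.negMulLog ((μ {ω | ε ω = p.1 ∧ X ω = x ∧ Y ω = p.2}).toReal) := by
          exact Finset.sum_congr rfl fun x _ => Finset.sum_congr rfl fun y' _ => hkey x y'
      _ = ∑ x : S, ∑ p : E × T,
            Real.negMulLog ((μ {ω | ε ω = p.1 ∧ X ω = x ∧ Y ω = p.2}).toReal) := by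
          exact Finset.sum_congr rfl fun x _ =>
            Finset.sum_fiberwise Finset.univ (fun p : E × T => g p.1 p.2) _
      _ = ∑ x : S, ∑ p : E × T, Real.negMulLog (q p.1 * r x p.2) := by
          exact Finset.sum_congr rfl fun x _ => Finset.sum_congr rfl fun p _ =>
            congrArg Real.negMulLog (hp p.1 x p.2)
      _ = ∑ x : S, ∑ p : E × T,
            (r x p.2 * Real.negMulLog (q p.1) + q p.1 * Real.negMulLog (r x p.2)) := by
          exact Finset.sum_congr rfl fun x _ => Finset.sum_congr rfl fun p _ =>
            Real.negMulLog_mul _ _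
      _ = ∑ x : S, ∑ e : E, ∑ y : T,
            (r x y * Real.negMulLog (q e) + q e * Real.negMulLog (r x y)) := by
          exact Finset.sum_congr rfl fun x _ => (Fintype.sum_prod_type _)
      _ = (∑ x : S, ∑ y : T, Real.negMulLog (r x y)) + shannonEntropy μ ε := by
          unfold shannonEntropy
          rw [Finset.sum_comm]
          simp only [Finset.sum_add_distrib, ← Finset.mul_sum, ← Finset.sum_mul]
          rw [hr1, hq1]
          simp only [hqdef]
          ring
  rw [hmain]
  ring
end

section
/- Let X, Y, and ε be random variables on a probability space taking values in finite sets, with ε independent of the pair (X, Y). Let g : E × 𝒴 → 𝒴 and set Y' = g(ε, Y). Assume the map (e, x, y) ↦ (x, g(e, y)) is one-to-one on the support of (ε, X, Y). Then the joint entropy satisfies H(X, Y') = H(X, Y) + H(ε). -/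
open MeasureTheory Real

lemma negMulLog_sum_subsingleton {α : Type*} (s : Finset α) (f : α → ℝ)
    (h : ∀ a ∈ s, ∀ b ∈ s, f a ≠ 0 → f b ≠ 0 → a = b) :
    Real.negMulLog (∑ a ∈ s, f a) = ∑ a ∈ s, Real.negMulLog (f a) := by
  by_cases hex : ∃ a ∈ s, f a ≠ 0
  · obtain ⟨a, ha, hfa⟩ := hex
    rw [Finset.sum_eq_single_of_mem a ha, Finset.sum_eq_single_of_mem a ha]
    · intro b hb hba
      by_contra hfb
      exact hba (h b hb a ha (fun h0 => hfb (by rw [h0, Real.negMulLog_zero])) hfa)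
    · intro b hb hba
      by_contra hfb
      exact hba (h b hb a ha hfb hfa)
  · push_neg at hex
    rw [Finset.sum_congr rfl hex, Finset.sum_const, smul_zero, Real.negMulLog_zero]
    rw [Finset.sum_congr rfl fun a ha => by rw [hex a ha, Real.negMulLog_zero],
      Finset.sum_const, smul_zero]

/-- Key intermediate claim in the proof of Theorem 1: under independence of `ε` from `(X, Y)`
and injectivity of `(e, x, y) ↦ (x, g(e, y))` on the support of `(ε, X, Y)`, the joint entropy
satisfies `H(X, Y') = H(X, Y) + H(ε)` where `Y' = g(ε, Y)`. -/
theorem jointEntropy_augment_eq_add_entropy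
    {Ω E S T : Type*} [MeasurableSpace Ω]
    [Fintype E] [Fintype S] [Fintype T]
    [MeasurableSpace E] [MeasurableSingletonClass E]
    [MeasurableSpace S] [MeasurableSingletonClass S]
    [MeasurableSpace T] [MeasurableSingletonClass T]
    (μ : Measure Ω) [IsProbabilityMeasure μ]
    (X : Ω → S) (Y : Ω → T) (ε : Ω → E)
    (hX : Measurable X) (hY : Measurable Y) (hε : Measurable ε)
    (g : E → T → T)
    (hInd : ∀ (e : E) (x : S) (y : T),
      μ {ω | ε ω = e ∧ X ω = x ∧ Y ω = y}
        = μ {ω | ε ω = e} * μ {ω | X ω = x ∧ Y ω = y})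
    (hInj : Set.InjOn (fun p : E × S × T => (p.2.1, g p.1 p.2.2))
      {p : E × S × T | μ {ω | ε ω = p.1 ∧ X ω = p.2.1 ∧ Y ω = p.2.2} ≠ 0}) :
    shannonEntropy μ (fun ω => (X ω, g (ε ω) (Y ω)))
      = shannonEntropy μ (fun ω => (X ω, Y ω)) + shannonEntropy μ ε := by
  classical
  set F : Ω → E × S × T := fun ω => (ε ω, X ω, Y ω) with hF
  have hFmeas : Measurable F := hε.prodMk (hX.prodMk hY)
  -- real-valued masses
  set m : E × S × T → ℝ := fun p => (μ (F ⁻¹' {p})).toReal with hm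
  have hfib : ∀ p : E × S × T,
      F ⁻¹' {p} = {ω | ε ω = p.1 ∧ X ω = p.2.1 ∧ Y ω = p.2.2} := by
    intro p
    ext ω
    simp [hF, Prod.ext_iff, Set.mem_preimage]
  -- Step A: decomposition of the fiber of (X, Y')
  have key : ∀ q : S × T,
      (μ ((fun ω => (X ω, g (ε ω) (Y ω))) ⁻¹' {q})).toReal
        = ∑ p : E × S × T, if (p.2.1, g p.1 p.2.2) = q then m p else 0 := by
    intro q
    have hset : (fun ω => (X ω, g (ε ω) (Y ω))) ⁻¹' {q}
        = F ⁻¹' ↑(Finset.univ.filter (fun p : E × S × T => (p.2.1, g p.1 p.2.2) = q)) := by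
      ext ω
      simp [hF, Prod.ext_iff]
    rw [hset, ← sum_measure_preimage_singleton _ (fun p _ => hFmeas (measurableSet_singleton p)),
      ENNReal.toReal_sum (fun p _ => measure_ne_top μ _), Finset.sum_filter]
  -- Step B: negMulLog of the decomposed sum, using injectivity
  have keyB : ∀ q : S × T,
      Real.negMulLog ((μ ((fun ω => (X ω, g (ε ω) (Y ω))) ⁻¹' {q})).toReal)
        = ∑ p : E × S × T, if (p.2.1, g p.1 p.2.2) = q then Real.negMulLog (m p) else 0 := by
    intro q
    rw [key q, negMulLog_sum_subsingleton]
    · exact Finset.sum_congr rfl fun p _ => by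
        split_ifs with h <;> simp [Real.negMulLog_zero]
    · intro a _ b _ hfa hfb
      have ha : (a.2.1, g a.1 a.2.2) = q ∧ m a ≠ 0 := by
        by_cases h : (a.2.1, g a.1 a.2.2) = q
        · exact ⟨h, by simpa [h] using hfa⟩
        · simp [h] at hfa
      have hb : (b.2.1, g b.1 b.2.2) = q ∧ m b ≠ 0 := by
        by_cases h : (b.2.1, g b.1 b.2.2) = q
        · exact ⟨h, by simpa [h] using hfb⟩
        · simp [h] at hfb
      have hma : μ {ω | ε ω = a.1 ∧ X ω = a.2.1 ∧ Y ω = a.2.2} ≠ 0 := by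
        rw [← hfib a]
        intro h0
        exact ha.2 (by simp [hm, h0])
      have hmb : μ {ω | ε ω = b.1 ∧ X ω = b.2.1 ∧ Y ω = b.2.2} ≠ 0 := by
        rw [← hfib b]
        intro h0
        exact hb.2 (by simp [hm, h0])
      exact hInj hma hmb (ha.1.trans hb.1.symm)
  -- now compute
  have sumswap : shannonEntropy μ (fun ω => (X ω, g (ε ω) (Y ω)))
      = ∑ p : E × S × T, Real.negMulLog (m p) := by
    rw [shannonEntropy]
    rw [Finset.sum_congr rfl fun q _ => keyB q, Finset.sum_comm]
    exact Finset.sum_congr rfl fun p _ => by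
      rw [Finset.sum_ite_eq Finset.univ (p.2.1, g p.1 p.2.2)
        (fun _ => Real.negMulLog (m p)), if_pos (Finset.mem_univ _)]
  -- independence: m p factors
  have hfac : ∀ p : E × S × T,
      m p = (μ (ε ⁻¹' {p.1})).toReal
        * (μ ((fun ω => (X ω, Y ω)) ⁻¹' {p.2})).toReal := by
    intro p
    have h1 : ε ⁻¹' {p.1} = {ω | ε ω = p.1} := by ext ω; simp
    have h2 : (fun ω => (X ω, Y ω)) ⁻¹' {p.2} = {ω | X ω = p.2.1 ∧ Y ω = p.2.2} := by
      ext ω; simp [Prod.ext_iff]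
    show (μ (F ⁻¹' {p})).toReal = _
    rw [hfib p, hInd p.1 p.2.1 p.2.2, ENNReal.toReal_mul, h1, h2]
  have hsum_e : ∑ e : E, (μ (ε ⁻¹' {e})).toReal = 1 := by
    rw [← ENNReal.toReal_sum (fun e _ => measure_ne_top μ _),
      sum_measure_preimage_singleton _ (fun e _ => hε (measurableSet_singleton e))]
    simp
  have hsum_q : ∑ r : S × T, (μ ((fun ω => (X ω, Y ω)) ⁻¹' {r})).toReal = 1 := by
    rw [← ENNReal.toReal_sum (fun r _ => measure_ne_top μ _),
      sum_measure_preimage_singleton _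
        (fun r _ => (hX.prodMk hY) (measurableSet_singleton r))]
    simp
  rw [sumswap]
  rw [Finset.sum_congr rfl fun p _ => by rw [hfac p, Real.negMulLog_mul]]
  rw [Fintype.sum_prod_type]
  simp only [Finset.sum_add_distrib, ← Finset.sum_mul, ← Finset.mul_sum]
  rw [hsum_q, hsum_e, one_mul, one_mul]
  simp only [shannonEntropy]
  exact add_comm _ _
end

section
/- Let X, Y, and ε be random variables on a probability space, where Y takes values in a finite set 𝒴 with n elements, X takes values in a finite set, and ε is independent of the pair (X, Y). Let g : E × 𝒴 → 𝒴 and set Y' = g(ε, Y). If the map (e, x, y) ↦ (x, g(e, y)) is one-to-one on the support of (ε, X, Y), then H(ε) ≤ log n − H(Y | X). Consequently, if H(Y | X) is within less than H(ε) of the maximum entropy log n, the one-to-one condition cannot hold. -/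
open MeasureTheory Real

/-- `negMulLog` of a sum with at most one nonzero term equals the sum of `negMulLog`s. -/
lemma negMulLog_sum_support_subsingleton {α : Type*} (F : Finset α) (h : α → ℝ)
    (H : ∀ a ∈ F, ∀ b ∈ F, h a ≠ 0 → h b ≠ 0 → a = b) :
    Real.negMulLog (∑ a ∈ F, h a) = ∑ a ∈ F, Real.negMulLog (h a) := by
  by_cases hz : ∀ a ∈ F, h a = 0
  · rw [Finset.sum_eq_zero hz, Real.negMulLog_zero,
      Finset.sum_eq_zero fun a ha => by rw [hz a ha, Real.negMulLog_zero]]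
  · push_neg at hz
    obtain ⟨a₀, ha₀F, ha₀⟩ := hz
    have hrest : ∀ b ∈ F, b ≠ a₀ → h b = 0 := by
      intro b hb hne
      by_contra hb0
      exact hne (H b hb a₀ ha₀F hb0 ha₀)
    rw [Finset.sum_eq_single_of_mem a₀ ha₀F hrest,
      Finset.sum_eq_single_of_mem a₀ ha₀F
        (fun b hb hne => by rw [hrest b hb hne, Real.negMulLog_zero])]

/-- Maximal-entropy style bound: for nonnegative `h`,
`∑ negMulLog (h a) ≤ negMulLog (∑ h) + (∑ h) * log (card α)`. -/
lemma sum_negMulLog_le_card {α : Type*} [Fintype α] [Nonempty α] (h : α → ℝ)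
    (h0 : ∀ a, 0 ≤ h a) :
    ∑ a, Real.negMulLog (h a)
      ≤ Real.negMulLog (∑ a, h a) + (∑ a, h a) * Real.log (Fintype.card α) := by
  have hn : (0:ℝ) < (Fintype.card α : ℝ) := by exact_mod_cast Fintype.card_pos
  by_cases hc : ∑ a, h a = 0
  · have hz : ∀ a ∈ Finset.univ, h a = 0 :=
      fun a ha => (Finset.sum_eq_zero_iff_of_nonneg (fun a _ => h0 a)).mp hc a ha
    rw [hc, Real.negMulLog_zero, zero_mul, add_zero]
    exact le_of_eq (Finset.sum_eq_zero fun a ha => by rw [hz a ha, Real.negMulLog_zero])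
  · have jensen := Real.concaveOn_negMulLog.le_map_sum (t := Finset.univ)
      (w := fun _ : α => ((Fintype.card α : ℝ))⁻¹) (p := h)
      (fun _ _ => by positivity)
      (by rw [Finset.sum_const, Finset.card_univ, nsmul_eq_mul, mul_inv_cancel₀ hn.ne'])
      (fun a _ => Set.mem_Ici.mpr (h0 a))
    have jensen' : ((Fintype.card α : ℝ))⁻¹ * ∑ a, Real.negMulLog (h a)
        ≤ Real.negMulLog (((Fintype.card α : ℝ))⁻¹ * ∑ a, h a) := by
      simpa [smul_eq_mul, ← Finset.mul_sum] using jensen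
    have hmul := mul_le_mul_of_nonneg_left jensen' (le_of_lt hn)
    rw [← mul_assoc, mul_inv_cancel₀ hn.ne', one_mul] at hmul
    refine hmul.trans (le_of_eq ?_)
    have hlog : Real.log ((Fintype.card α : ℝ)⁻¹ * ∑ a, h a)
        = Real.log (∑ a, h a) - Real.log (Fintype.card α) := by
      rw [Real.log_mul (inv_ne_zero hn.ne') hc, Real.log_inv]; ring
    simp only [Real.negMulLog, hlog]
    field_simp
    ring

/-- Decomposition of (the real value of) a measure of a set into fibers of a
finitely-valued measurable map. -/
lemma toReal_measure_eq_sum_fiber {Ω S : Type*} [MeasurableSpace Ω] [Fintype S]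
    [MeasurableSpace S] [MeasurableSingletonClass S]
    (μ : Measure Ω) [IsFiniteMeasure μ] (f : Ω → S) (hf : Measurable f) (A : Set Ω) :
    (μ A).toReal = ∑ x : S, (μ (f ⁻¹' {x} ∩ A)).toReal := by
  have h1 : ∀ x : S, μ.restrict A (f ⁻¹' {x}) = μ (f ⁻¹' {x} ∩ A) :=
    fun x => Measure.restrict_apply (hf (measurableSet_singleton x))
  have h2 : (∑ x : S, μ (f ⁻¹' {x} ∩ A)) = μ A := by
    rw [← Finset.sum_congr rfl (fun x _ => h1 x),
      MeasureTheory.sum_measure_preimage_singleton Finset.univ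
        (fun y _ => hf (measurableSet_singleton y))]
    simp
  rw [← h2, ENNReal.toReal_sum]
  intro a _
  exact ne_of_lt (lt_of_le_of_lt (measure_mono Set.inter_subset_right)
    (measure_lt_top μ A))

/-- Core combinatorial inequality, abstracted from the measure-theoretic setting. -/
lemma core_entropy_bound {E S T : Type*} [Fintype E] [Fintype S] [Fintype T] [Nonempty T]
    [DecidableEq S] [DecidableEq T]
    (p : E × S × T → ℝ) (q : E → ℝ) (r : S × T → ℝ) (s : S → ℝ)
    (g : E → T → T)
    (hp0 : ∀ u, 0 ≤ p u) (hr0 : ∀ v, 0 ≤ r v)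
    (hq1 : ∑ e, q e = 1)
    (hpqr : ∀ u, p u = q u.1 * r u.2)
    (hrp : ∀ v : S × T, r v = ∑ e, p (e, v.1, v.2))
    (hsr : ∀ x, s x = ∑ y, r (x, y))
    (hs1 : ∑ x, s x = 1)
    (hInj : Set.InjOn (fun u : E × S × T => (u.2.1, g u.1 u.2.2)) {u | p u ≠ 0}) :
    (∑ e, Real.negMulLog (q e)) + ∑ x, s x * ∑ y, Real.negMulLog (r (x, y) / s x)
      ≤ Real.log (Fintype.card T) := by
  classical
  set f : E × S × T → S × T := fun u => (u.2.1, g u.1 u.2.2) with hf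
  set t : S × T → ℝ := fun v => ∑ u ∈ Finset.univ.filter (fun u => f u = v), p u with ht
  have hr1 : ∑ v : S × T, r v = 1 := by
    rw [Fintype.sum_prod_type]
    simp_rw [← hsr]
    exact hs1
  -- Step A : joint entropy of (ε, (X,Y)) splits by independence
  have stepA : ∑ u : E × S × T, Real.negMulLog (p u)
      = (∑ e, Real.negMulLog (q e)) + ∑ v : S × T, Real.negMulLog (r v) := by
    calc ∑ u : E × S × T, Real.negMulLog (p u)
        = ∑ e, ∑ v : S × T, (r v * Real.negMulLog (q e) + q e * Real.negMulLog (r v)) := by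
          rw [Fintype.sum_prod_type]
          refine Finset.sum_congr rfl fun e _ => Finset.sum_congr rfl fun v _ => ?_
          rw [hpqr (e, v), Real.negMulLog_mul]
      _ = ∑ e, (Real.negMulLog (q e) + q e * ∑ v : S × T, Real.negMulLog (r v)) := by
          refine Finset.sum_congr rfl fun e _ => ?_
          rw [Finset.sum_add_distrib, ← Finset.sum_mul, hr1, one_mul, ← Finset.mul_sum]
      _ = _ := by
          rw [Finset.sum_add_distrib, ← Finset.sum_mul, hq1, one_mul]
  -- Step B : chain rule for conditional entropy
  have stepB : ∑ x, s x * ∑ y, Real.negMulLog (r (x, y) / s x)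
      = (∑ v : S × T, Real.negMulLog (r v)) - ∑ x, Real.negMulLog (s x) := by
    have key : ∀ x, s x * ∑ y, Real.negMulLog (r (x, y) / s x)
        = (∑ y, Real.negMulLog (r (x, y))) - Real.negMulLog (s x) := by
      intro x
      by_cases hx : s x = 0
      · have hzero : ∀ y, r (x, y) = 0 := by
          intro y
          have h := (hsr x).symm
          rw [hx] at h
          exact (Finset.sum_eq_zero_iff_of_nonneg (fun y _ => hr0 (x, y))).mp h y
            (Finset.mem_univ y)
        simp [hx, hzero]
      · have hterm : ∀ y, s x * Real.negMulLog (r (x, y) / s x)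
            = Real.negMulLog (r (x, y)) + r (x, y) * Real.log (s x) := by
          intro y
          by_cases hry : r (x, y) = 0
          · simp [hry]
          · simp only [Real.negMulLog, Real.log_div hry hx]
            field_simp
            ring
        rw [Finset.mul_sum, Finset.sum_congr rfl fun y _ => hterm y,
          Finset.sum_add_distrib, ← Finset.sum_mul, ← hsr x]
        simp only [Real.negMulLog]
        ring
    rw [Finset.sum_congr rfl fun x _ => key x, Finset.sum_sub_distrib,
      Fintype.sum_prod_type]
  -- Step C : injectivity on the support identifies the joint entropies
  have stepC : ∑ u : E × S × T, Real.negMulLog (p u)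
      = ∑ v : S × T, Real.negMulLog (t v) := by
    rw [← Finset.sum_fiberwise Finset.univ f (fun u => Real.negMulLog (p u))]
    refine Finset.sum_congr rfl fun v _ => ?_
    refine (negMulLog_sum_support_subsingleton _ _ fun a ha b hb ha0 hb0 => ?_).symm
    rw [Finset.mem_filter] at ha hb
    exact hInj ha0 hb0 (by rw [show f a = v from ha.2, show f b = v from hb.2])
  -- Step D : marginal of t over the second coordinate is s
  have marg : ∀ x, ∑ y' : T, t (x, y') = s x := by
    intro x
    have hfil : ∀ y' : T, t (x, y') = ∑ u : E × S × T, if f u = (x, y') then p u else 0 :=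
      fun y' => Finset.sum_filter _ _
    rw [Finset.sum_congr rfl fun y' _ => hfil y', Finset.sum_comm]
    have inner : ∀ u : E × S × T, (∑ y' : T, if f u = (x, y') then p u else 0)
        = if u.2.1 = x then p u else 0 := by
      intro u
      by_cases hA : u.2.1 = x
      · simp [hf, Prod.ext_iff, hA]
      · simp [hf, Prod.ext_iff, hA]
    rw [Finset.sum_congr rfl fun u _ => inner u]
    calc ∑ u : E × S × T, (if u.2.1 = x then p u else 0)
        = ∑ e, ∑ x0, ∑ y, (if x0 = x then p (e, x0, y) else 0) := by
          rw [Fintype.sum_prod_type]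
          exact Finset.sum_congr rfl fun e _ => Fintype.sum_prod_type _
      _ = ∑ e, ∑ y, p (e, x, y) := by
          refine Finset.sum_congr rfl fun e _ => ?_
          have hpull : ∀ x0 : S, (∑ y, if x0 = x then p (e, x0, y) else 0)
              = if x0 = x then ∑ y, p (e, x0, y) else 0 := by
            intro x0; split <;> simp
          rw [Finset.sum_congr rfl fun x0 _ => hpull x0,
            Finset.sum_ite_eq' Finset.univ x (fun x0 => ∑ y, p (e, x0, y))]
          simp
      _ = ∑ y, r (x, y) := by
          rw [Finset.sum_comm]
          exact Finset.sum_congr rfl fun y _ => (hrp (x, y)).symm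
      _ = s x := (hsr x).symm
  -- Step E : maximal-entropy bound
  have ht0 : ∀ v, 0 ≤ t v := fun v => Finset.sum_nonneg fun u _ => hp0 u
  have stepE : ∑ v : S × T, Real.negMulLog (t v)
      ≤ (∑ x, Real.negMulLog (s x)) + Real.log (Fintype.card T) := by
    rw [Fintype.sum_prod_type]
    calc ∑ x, ∑ y', Real.negMulLog (t (x, y'))
        ≤ ∑ x, (Real.negMulLog (s x) + s x * Real.log (Fintype.card T)) := by
          refine Finset.sum_le_sum fun x _ => ?_
          have h := sum_negMulLog_le_card (fun y' => t (x, y')) (fun y' => ht0 _)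
          rwa [marg x] at h
      _ = (∑ x, Real.negMulLog (s x)) + (∑ x, s x) * Real.log (Fintype.card T) := by
          rw [Finset.sum_add_distrib, ← Finset.sum_mul]
      _ = _ := by rw [hs1, one_mul]
  linarith [stepA, stepB, stepC, stepE]

/-- Appendix A remark: if `ε` is independent of `(X, Y)` and the map `(e, x, y) ↦ (x, g(e, y))`
is one-to-one on the support of `(ε, X, Y)`, where `Y` takes values in a finite set with `n`
elements, then `H(ε) ≤ log n - H(Y | X)`. Hence when `H(Y | X)` is within less than `H(ε)` of
the maximal entropy `log n`, the one-to-one condition cannot hold. -/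
theorem entropy_noise_le_log_card_sub_condEntropy
    {Ω E S T : Type*} [MeasurableSpace Ω]
    [Fintype E] [Fintype S] [Fintype T]
    [MeasurableSpace E] [MeasurableSingletonClass E]
    [MeasurableSpace S] [MeasurableSingletonClass S]
    [MeasurableSpace T] [MeasurableSingletonClass T]
    (μ : Measure Ω) [IsProbabilityMeasure μ]
    (X : Ω → S) (Y : Ω → T) (ε : Ω → E)
    (hX : Measurable X) (hY : Measurable Y) (hε : Measurable ε)
    (g : E → T → T)
    (hInd : ∀ (e : E) (x : S) (y : T),
      μ {ω | ε ω = e ∧ X ω = x ∧ Y ω = y}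
        = μ {ω | ε ω = e} * μ {ω | X ω = x ∧ Y ω = y})
    (hInj : Set.InjOn (fun p : E × S × T => (p.2.1, g p.1 p.2.2))
      {p : E × S × T | μ {ω | ε ω = p.1 ∧ X ω = p.2.1 ∧ Y ω = p.2.2} ≠ 0}) :
    shannonEntropy μ ε ≤ Real.log (Fintype.card T) - condShannonEntropy μ Y X := by
  classical
  have hΩ : Nonempty Ω := by
    by_contra h
    rw [not_nonempty_iff] at h
    have h1 : μ Set.univ = 1 := measure_univ
    rw [Set.univ_eq_empty_iff.mpr h, measure_empty] at h1
    exact one_ne_zero h1.symm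
  have hT : Nonempty T := ⟨Y (Classical.arbitrary Ω)⟩
  have hsetE : ∀ e : E, {ω | ε ω = e} = ε ⁻¹' {e} := by
    intro e; ext ω; simp
  have hsetXY : ∀ (x : S) (y : T), {ω | X ω = x ∧ Y ω = y} = X ⁻¹' {x} ∩ Y ⁻¹' {y} := by
    intro x y; ext ω; simp [Set.mem_inter_iff]
  have hsetXYE : ∀ (e : E) (x : S) (y : T),
      {ω | ε ω = e ∧ X ω = x ∧ Y ω = y} = ε ⁻¹' {e} ∩ (X ⁻¹' {x} ∩ Y ⁻¹' {y}) := by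
    intro e x y; ext ω; simp [Set.mem_inter_iff]
  have key := core_entropy_bound
    (p := fun u : E × S × T => (μ {ω | ε ω = u.1 ∧ X ω = u.2.1 ∧ Y ω = u.2.2}).toReal)
    (q := fun e => (μ (ε ⁻¹' {e})).toReal)
    (r := fun v : S × T => (μ (X ⁻¹' {v.1} ∩ Y ⁻¹' {v.2})).toReal)
    (s := fun x => (μ (X ⁻¹' {x})).toReal)
    (g := g)
    (fun u => ENNReal.toReal_nonneg)
    (fun v => ENNReal.toReal_nonneg)
    (by
      have h := toReal_measure_eq_sum_fiber μ ε hε Set.univ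
      simpa using h.symm)
    (by
      intro u
      show (μ {ω | ε ω = u.1 ∧ X ω = u.2.1 ∧ Y ω = u.2.2}).toReal
        = (μ (ε ⁻¹' {u.1})).toReal * (μ (X ⁻¹' {u.2.1} ∩ Y ⁻¹' {u.2.2})).toReal
      rw [hInd u.1 u.2.1 u.2.2, ENNReal.toReal_mul, hsetXY, hsetE])
    (by
      intro v
      show (μ (X ⁻¹' {v.1} ∩ Y ⁻¹' {v.2})).toReal
        = ∑ e, (μ {ω | ε ω = e ∧ X ω = v.1 ∧ Y ω = v.2}).toReal
      rw [toReal_measure_eq_sum_fiber μ ε hε (X ⁻¹' {v.1} ∩ Y ⁻¹' {v.2})]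
      exact Finset.sum_congr rfl fun e _ => by rw [hsetXYE e v.1 v.2])
    (by
      intro x
      show (μ (X ⁻¹' {x})).toReal = ∑ y, (μ (X ⁻¹' {x} ∩ Y ⁻¹' {y})).toReal
      rw [toReal_measure_eq_sum_fiber μ Y hY (X ⁻¹' {x})]
      exact Finset.sum_congr rfl fun y _ => by rw [Set.inter_comm])
    (by
      have h := toReal_measure_eq_sum_fiber μ X hX Set.univ
      simpa using h.symm)
    (by
      refine hInj.mono fun u hu => ?_
      simp only [Set.mem_setOf_eq] at hu ⊢
      intro h0
      exact hu (by rw [h0, ENNReal.toReal_zero]))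
  rw [shannonEntropy, condShannonEntropy]
  linarith [key]
end

section
/- Let X, Y, and ε be random variables on a probability space taking values in finite sets, with ε independent of the pair (X, Y). Let h : E × 𝒳 → 𝒳' be a map into a finite set such that (e, x) ↦ h(e, x) is one-to-one on the support of (ε, X), and set X' = h(ε, X) and Y' = Y. Then H(Y' | X') = H(Y | X); that is, the augmentation is CE-preserving. -/
open MeasureTheory Real

theorem measure_eq_sum_fiber' {Ω A : Type*} [MeasurableSpace Ω] [Fintype A]
    [MeasurableSpace A] [MeasurableSingletonClass A]
    (μ : Measure Ω) {B : Set Ω} (hB : MeasurableSet B) {f : Ω → A} (hf : Measurable f) :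
    μ B = ∑ a : A, μ (B ∩ f ⁻¹' {a}) := by
  have hd : Pairwise (Function.onFun Disjoint (fun a : A => B ∩ f ⁻¹' {a})) := by
    intro a b hab
    rw [Function.onFun, Set.disjoint_left]
    rintro ω ⟨-, ha⟩ ⟨-, hb⟩
    simp only [Set.mem_preimage, Set.mem_singleton_iff] at ha hb
    exact hab (by rw [← ha, ← hb])
  have hm : ∀ a : A, MeasurableSet (B ∩ f ⁻¹' {a}) :=
    fun a => hB.inter (hf (measurableSet_singleton a))
  calc μ B = μ (⋃ a : A, B ∩ f ⁻¹' {a}) := by congr 1; ext ω; simp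
    _ = ∑' a : A, μ (B ∩ f ⁻¹' {a}) := measure_iUnion hd hm
    _ = ∑ a : A, μ (B ∩ f ⁻¹' {a}) := tsum_fintype _

/-- CE-preserving augmentation of the inputs: if `ε` is independent of `(X, Y)` and
`(e, x) ↦ h(e, x)` is one-to-one on the support of `(ε, X)`, then with `X' = h(ε, X)` and
`Y' = Y` we have `H(Y' | X') = H(Y | X)`. -/
theorem condEntropy_input_augment_eq
    {Ω E S S' T : Type*} [MeasurableSpace Ω]
    [Fintype E] [Fintype S] [Fintype S'] [Fintype T]
    [MeasurableSpace E] [MeasurableSingletonClass E]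
    [MeasurableSpace S] [MeasurableSingletonClass S]
    [MeasurableSpace S'] [MeasurableSingletonClass S']
    [MeasurableSpace T] [MeasurableSingletonClass T]
    (μ : Measure Ω) [IsProbabilityMeasure μ]
    (X : Ω → S) (Y : Ω → T) (ε : Ω → E)
    (hX : Measurable X) (hY : Measurable Y) (hε : Measurable ε)
    (h : E → S → S')
    (hInd : ∀ (e : E) (x : S) (y : T),
      μ {ω | ε ω = e ∧ X ω = x ∧ Y ω = y}
        = μ {ω | ε ω = e} * μ {ω | X ω = x ∧ Y ω = y})
    (hInj : Set.InjOn (fun p : E × S => h p.1 p.2)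
      {p : E × S | μ {ω | ε ω = p.1 ∧ X ω = p.2} ≠ 0}) :
    condShannonEntropy μ Y (fun ω => h (ε ω) (X ω)) = condShannonEntropy μ Y X := by
  classical
  set X' : Ω → S' := fun ω => h (ε ω) (X ω) with hX'def
  set f : Ω → E × S := fun ω => (ε ω, X ω) with hfdef
  have hf : Measurable f := hε.prodMk hX
  have hX' : Measurable X' := (measurable_of_countable (fun p : E × S => h p.1 p.2)).comp hf
  -- fibers of f
  have hfib : ∀ p : E × S, f ⁻¹' {p} = ε ⁻¹' {p.1} ∩ X ⁻¹' {p.2} := by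
    intro p; ext ω
    simp [hfdef, Prod.ext_iff]
  have hAm : ∀ p : E × S, MeasurableSet (ε ⁻¹' {p.1} ∩ X ⁻¹' {p.2}) :=
    fun p => (hε (measurableSet_singleton _)).inter (hX (measurableSet_singleton _))
  -- rewrite independence in preimage language
  have hset3 : ∀ (e : E) (x : S) (y : T),
      {ω | ε ω = e ∧ X ω = x ∧ Y ω = y} = ε ⁻¹' {e} ∩ X ⁻¹' {x} ∩ Y ⁻¹' {y} := by
    intro e x y; ext ω; simp [and_assoc]
  have hInd' : ∀ (e : E) (x : S) (y : T),
      μ (ε ⁻¹' {e} ∩ X ⁻¹' {x} ∩ Y ⁻¹' {y}) = μ (ε ⁻¹' {e}) * μ (X ⁻¹' {x} ∩ Y ⁻¹' {y}) := by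
    intro e x y
    have := hInd e x y
    rw [hset3] at this
    convert this using 2 <;> rfl
  -- F2 : product formula for the pair (ε, X)
  have hF2 : ∀ (e : E) (x : S),
      μ (ε ⁻¹' {e} ∩ X ⁻¹' {x}) = μ (ε ⁻¹' {e}) * μ (X ⁻¹' {x}) := by
    intro e x
    rw [measure_eq_sum_fiber' μ (hAm (e, x)) hY]
    simp only [hInd']
    rw [← Finset.mul_sum, ← measure_eq_sum_fiber' μ (hX (measurableSet_singleton x)) hY]
  -- q p nonzero iff support
  have hq0 : ∀ p : E × S, μ {ω | ε ω = p.1 ∧ X ω = p.2} = μ (ε ⁻¹' {p.1} ∩ X ⁻¹' {p.2}) := by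
    intro p; congr 1
  -- each fiber of X' intersected with f-fiber
  have hterm : ∀ (x' : S') (y : T) (p : E × S),
      X' ⁻¹' {x'} ∩ Y ⁻¹' {y} ∩ f ⁻¹' {p}
        = if h p.1 p.2 = x' then ε ⁻¹' {p.1} ∩ X ⁻¹' {p.2} ∩ Y ⁻¹' {y} else ∅ := by
    intro x' y p
    split
    · next hp =>
      ext ω
      simp only [hfib, Set.mem_inter_iff, Set.mem_preimage, Set.mem_singleton_iff, hX'def,
        hfdef, Prod.ext_iff]
      constructor
      · rintro ⟨⟨-, hy⟩, he, hx⟩; exact ⟨⟨he, hx⟩, hy⟩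
      · rintro ⟨⟨he, hx⟩, hy⟩; exact ⟨⟨by rw [he, hx]; exact hp, hy⟩, he, hx⟩
    · next hp =>
      ext ω
      simp only [hfib, Set.mem_inter_iff, Set.mem_preimage, Set.mem_singleton_iff, hX'def,
        Set.mem_empty_iff_false, iff_false]
      rintro ⟨⟨hx', -⟩, he, hx⟩
      apply hp
      rw [← hx']
      congr 1 <;> simp [he, hx]
  -- F3 : for supported p, the X'-fiber of h p coincides (in measure) with the f-fiber of p
  have hF3 : ∀ p : E × S, μ (ε ⁻¹' {p.1} ∩ X ⁻¹' {p.2}) ≠ 0 → ∀ y : T,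
      μ (X' ⁻¹' {h p.1 p.2} ∩ Y ⁻¹' {y}) = μ (ε ⁻¹' {p.1} ∩ X ⁻¹' {p.2} ∩ Y ⁻¹' {y}) := by
    intro p hp y
    rw [measure_eq_sum_fiber' μ
      ((hX' (measurableSet_singleton _)).inter (hY (measurableSet_singleton _))) hf]
    rw [Finset.sum_eq_single p]
    · rw [hterm, if_pos rfl]
    · intro r _ hr
      rw [hterm]
      split
      · next hhr =>
        have : μ (ε ⁻¹' {r.1} ∩ X ⁻¹' {r.2}) = 0 := by
          by_contra hr0
          exact hr (hInj (by rw [Set.mem_setOf_eq, hq0]; exact hr0)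
            (by rw [Set.mem_setOf_eq, hq0]; exact hp) hhr)
        exact le_antisymm (le_trans (measure_mono (Set.inter_subset_left)) this.le) zero_le
      · exact measure_empty
    · intro habs; exact absurd (Finset.mem_univ p) habs
  have hF4 : ∀ p : E × S, μ (ε ⁻¹' {p.1} ∩ X ⁻¹' {p.2}) ≠ 0 →
      μ (X' ⁻¹' {h p.1 p.2}) = μ (ε ⁻¹' {p.1} ∩ X ⁻¹' {p.2}) := by
    intro p hp
    rw [measure_eq_sum_fiber' μ (hX' (measurableSet_singleton _)) hY,
      measure_eq_sum_fiber' μ (hAm p) hY]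
    exact Finset.sum_congr rfl fun y _ => hF3 p hp y
  -- inner sums
  set K : S → ℝ := fun x => ∑ y : T,
    negMulLog ((μ (X ⁻¹' {x} ∩ Y ⁻¹' {y})).toReal / (μ (X ⁻¹' {x})).toReal) with hK
  set G : S' → ℝ := fun x' => ∑ y : T,
    negMulLog ((μ (X' ⁻¹' {x'} ∩ Y ⁻¹' {y})).toReal / (μ (X' ⁻¹' {x'})).toReal) with hG
  -- Claim A
  have hGK : ∀ p : E × S, μ (ε ⁻¹' {p.1} ∩ X ⁻¹' {p.2}) ≠ 0 → G (h p.1 p.2) = K p.2 := by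
    intro p hp
    have hεne : (μ (ε ⁻¹' {p.1})).toReal ≠ 0 := by
      rw [ENNReal.toReal_ne_zero]
      refine ⟨fun h0 => hp ?_, measure_ne_top μ _⟩
      rw [hF2]; rw [h0]; exact zero_mul _
    rw [hG, hK]
    refine Finset.sum_congr rfl fun y _ => ?_
    rw [hF3 p hp y, hF4 p hp, hInd' p.1 p.2 y, hF2 p.1 p.2,
      ENNReal.toReal_mul, ENNReal.toReal_mul, mul_div_mul_left _ _ hεne]
  -- main computation
  unfold condShannonEntropy
  rw [show (∑ x' : S', (μ ((fun ω => h (ε ω) (X ω)) ⁻¹' {x'})).toReal *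
      ∑ y : T, negMulLog ((μ ((fun ω => h (ε ω) (X ω)) ⁻¹' {x'} ∩ Y ⁻¹' {y})).toReal /
        (μ ((fun ω => h (ε ω) (X ω)) ⁻¹' {x'})).toReal))
      = ∑ x' : S', (μ (X' ⁻¹' {x'})).toReal * G x' from rfl]
  have hterm2 : ∀ (x' : S') (p : E × S),
      X' ⁻¹' {x'} ∩ f ⁻¹' {p}
        = if h p.1 p.2 = x' then ε ⁻¹' {p.1} ∩ X ⁻¹' {p.2} else ∅ := by
    intro x' p
    split
    · next hp =>
      ext ω
      simp only [hfib, Set.mem_inter_iff, Set.mem_preimage, Set.mem_singleton_iff, hX'def,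
        hfdef, Prod.ext_iff]
      constructor
      · rintro ⟨-, he, hx⟩; exact ⟨he, hx⟩
      · rintro ⟨he, hx⟩; exact ⟨by rw [he, hx]; exact hp, he, hx⟩
    · next hp =>
      ext ω
      simp only [hfib, Set.mem_inter_iff, Set.mem_preimage, Set.mem_singleton_iff, hX'def,
        Set.mem_empty_iff_false, iff_false]
      rintro ⟨hx', he, hx⟩
      apply hp
      rw [← hx']
      congr 1 <;> simp [he, hx]
  have hdec : ∀ x' : S', (μ (X' ⁻¹' {x'})).toReal
      = ∑ p : E × S, if h p.1 p.2 = x' then (μ (ε ⁻¹' {p.1} ∩ X ⁻¹' {p.2})).toReal else 0 := by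
    intro x'
    rw [measure_eq_sum_fiber' μ (hX' (measurableSet_singleton _)) hf,
      ENNReal.toReal_sum (fun p _ => measure_ne_top μ _)]
    refine Finset.sum_congr rfl fun p _ => ?_
    rw [hterm2, apply_ite (fun s => (μ s).toReal), measure_empty, ENNReal.toReal_zero]
  calc ∑ x' : S', (μ (X' ⁻¹' {x'})).toReal * G x'
      = ∑ x' : S', ∑ p : E × S,
          (if h p.1 p.2 = x' then (μ (ε ⁻¹' {p.1} ∩ X ⁻¹' {p.2})).toReal * G x' else 0) := by
        refine Finset.sum_congr rfl fun x' _ => ?_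
        rw [hdec x', Finset.sum_mul]
        exact Finset.sum_congr rfl fun p _ => by rw [ite_mul, zero_mul]
    _ = ∑ p : E × S, ∑ x' : S',
          (if h p.1 p.2 = x' then (μ (ε ⁻¹' {p.1} ∩ X ⁻¹' {p.2})).toReal * G x' else 0) :=
        Finset.sum_comm
    _ = ∑ p : E × S, (μ (ε ⁻¹' {p.1} ∩ X ⁻¹' {p.2})).toReal * G (h p.1 p.2) := by
        refine Finset.sum_congr rfl fun p _ => ?_
        simp
    _ = ∑ p : E × S, (μ (ε ⁻¹' {p.1} ∩ X ⁻¹' {p.2})).toReal * K p.2 := by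
        refine Finset.sum_congr rfl fun p _ => ?_
        by_cases hp : μ (ε ⁻¹' {p.1} ∩ X ⁻¹' {p.2}) = 0
        · rw [hp]; simp
        · rw [hGK p hp]
    _ = ∑ x : S, ∑ e : E, (μ (ε ⁻¹' {e} ∩ X ⁻¹' {x})).toReal * K x :=
        Fintype.sum_prod_type_right _
    _ = ∑ x : S, (μ (X ⁻¹' {x})).toReal * K x := by
        refine Finset.sum_congr rfl fun x _ => ?_
        rw [← Finset.sum_mul]
        congr 1
        rw [← ENNReal.toReal_sum (fun e _ => measure_ne_top μ _)]
        congr 1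
        rw [measure_eq_sum_fiber' μ (hX (measurableSet_singleton x)) hε]
        exact Finset.sum_congr rfl fun e _ => by rw [Set.inter_comm]
end
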